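/- Let F be a field and let f : F → F be an additive bijection with f(0) = 0 and f(1) = 1 satisfying f(ab/(a+b)) = f(a)f(b)/(f(a)+f(b)) for all nonzero a,b ∈ F with a + b ≠ 0 and f(a)+f(b) ≠ 0. Then f is multiplicative, i.e. f is a field automorphism of F. -/

import Mathlib

/-- Let `f : F → F` be an additive bijection with `f 0 = 0`, `f 1 = 1` satisfying
`f (ab/(a+b)) = f(a)f(b)/(f(a)+f(b))` whenever all terms make sense.  Then `f` is
multiplicative, i.e. `f` is a field automorphism of `F`. -/
theorem mul_of_additive_harmonic {F : Type*} [Field F] (f : F → F)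
    (hbij : Function.Bijective f)
    (hadd : ∀ x y : F, f (x + y) = f x + f y)
    (h0 : f 0 = 0) (h1 : f 1 = 1)
    (hharm : ∀ a b : F, a ≠ 0 → b ≠ 0 → a + b ≠ 0 → f a + f b ≠ 0 →
      f (a * b / (a + b)) = f a * f b / (f a + f b)) :
    ∀ a b : F, f (a * b) = f a * f b := by
  have hinj : Function.Injective f := hbij.1
  have hne : ∀ x : F, x ≠ 0 → f x ≠ 0 := fun x hx h => hx (hinj (h.trans h0.symm))
  have hneg : ∀ x : F, f (-x) = - f x := by
    intro x
    have h := hadd x (-x)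
    rw [add_neg_cancel, h0] at h
    linear_combination -h
  -- g x = (f x⁻¹)⁻¹
  set g : F → F := fun x => (f x⁻¹)⁻¹ with hg
  have hgdef : ∀ x : F, g x = (f x⁻¹)⁻¹ := fun _ => rfl
  have hginv : ∀ x : F, g x⁻¹ = (f x)⁻¹ := fun x => by rw [hgdef, inv_inv]
  have hfinv : ∀ x : F, f x⁻¹ = (g x)⁻¹ := fun x => (inv_inv _).symm
  have hf' : ∀ s : F, f s = (g s⁻¹)⁻¹ := fun s => by
    have := hfinv s⁻¹; rwa [inv_inv] at this
  have hg0 : g 0 = 0 := by simp [hgdef, h0]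
  have hg1 : g 1 = 1 := by simp [hgdef, h1]
  have hgne : ∀ x : F, x ≠ 0 → g x ≠ 0 := fun x hx =>
    inv_ne_zero (hne _ (inv_ne_zero hx))
  have hgneg : ∀ x : F, g (-x) = - g x := by
    intro x
    rw [hgdef, hgdef, inv_neg, hneg, inv_neg]
  have hgadd : ∀ x y : F, g (x + y) = g x + g y := by
    intro x y
    rcases eq_or_ne x 0 with rfl | hx
    · simp [hg0]
    rcases eq_or_ne y 0 with rfl | hy
    · simp [hg0]
    rcases eq_or_ne (x + y) 0 with hxy | hxy
    · have hy' : y = -x := by linear_combination hxy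
      subst hy'
      rw [hxy, hg0, hgneg, add_neg_cancel]
    · have h1x : x⁻¹ ≠ 0 := inv_ne_zero hx
      have h1y : y⁻¹ ≠ 0 := inv_ne_zero hy
      have hsum : x⁻¹ + y⁻¹ ≠ 0 := by
        have : x⁻¹ + y⁻¹ = (x + y) / (x * y) := by field_simp; ring
        rw [this]
        exact div_ne_zero hxy (mul_ne_zero hx hy)
      have hfsum : f x⁻¹ + f y⁻¹ ≠ 0 := by
        intro h
        have : f x⁻¹ = f (-y⁻¹) := by rw [hneg]; linear_combination h
        have hxy' : x⁻¹ = -y⁻¹ := hinj this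
        apply hxy
        have : x = -y := by
          have := congrArg (·⁻¹) hxy'
          simpa [inv_neg] using this
        rw [this]; ring
      have key := hharm x⁻¹ y⁻¹ h1x h1y hsum hfsum
      have harg : x⁻¹ * y⁻¹ / (x⁻¹ + y⁻¹) = (x + y)⁻¹ := by
        field_simp [hxy]
        rw [add_comm y x, div_self hxy]
      rw [harg] at key
      rw [hgdef, key, hgdef, hgdef]
      have hA : f x⁻¹ ≠ 0 := hne _ h1x
      have hB : f y⁻¹ ≠ 0 := hne _ h1y
      rw [inv_div, inv_add_inv hA hB]
  -- f preserves squares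
  have hsub : ∀ x y : F, f (x - y) = f x - f y := by
    intro x y
    rw [sub_eq_add_neg, hadd, hneg, sub_eq_add_neg]
  have hfsq : ∀ x : F, f (x ^ 2) = f x ^ 2 := by
    intro x
    rcases eq_or_ne x 0 with rfl | hx
    · simp [h0]
    rcases eq_or_ne x 1 with rfl | hx1
    · simp [h1]
    have hx1' : x - 1 ≠ 0 := sub_ne_zero_of_ne hx1
    have hxx : x ^ 2 - x ≠ 0 := by
      intro h
      apply hx1'
      have := mul_ne_zero hx hx1'
      rw [show x ^ 2 - x = x * (x - 1) by ring] at h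
      rcases mul_eq_zero.1 h with h' | h'
      · exact absurd h' hx
      · exact h'
    have hA : f x ≠ 0 := hne _ hx
    have hA1 : f (x - 1) ≠ 0 := hne _ hx1'
    have hfx1 : f (x - 1) = f x - 1 := by rw [hsub, h1]
    have e1 : (x ^ 2 - x)⁻¹ = (x - 1)⁻¹ - x⁻¹ := by
      field_simp
      ring
    have e2 : g ((x ^ 2 - x)⁻¹) = (f (x - 1))⁻¹ - (f x)⁻¹ := by
      rw [e1, sub_eq_add_neg, hgadd, hgneg, hginv, hginv]
      abel
    have e3 : f (x ^ 2 - x) = ((f (x - 1))⁻¹ - (f x)⁻¹)⁻¹ := by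
      rw [hf' (x ^ 2 - x), e2]
    have e4 : (f (x - 1))⁻¹ - (f x)⁻¹ = ((f x - 1) * f x)⁻¹ := by
      rw [hfx1]
      have h1' : f x - 1 ≠ 0 := by rw [← hfx1]; exact hA1
      field_simp
      ring
    have e5 : f (x ^ 2 - x) = (f x - 1) * f x := by
      rw [e3, e4, inv_inv]
    have e6 : f (x ^ 2 - x) = f (x ^ 2) - f x := hsub _ _
    rw [e6] at e5
    linear_combination e5
  -- Hua's identity (value form)
  have hval : ∀ A B : F, A ≠ 0 → B ≠ 0 → B⁻¹ ^ 2 - A ≠ 0 →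
      A - (A⁻¹ + (B⁻¹ ^ 2 - A)⁻¹)⁻¹ = A ^ 2 * B ^ 2 := by
    intro A B hA hB hD
    have hD' : 1 - B ^ 2 * A ≠ 0 := by
      intro h
      apply hD
      have e : B⁻¹ ^ 2 * (1 - B ^ 2 * A) = B⁻¹ ^ 2 - A := by
        field_simp
      rw [← e, h, mul_zero]
    field_simp [hD']
    have hD'' : 1 - A * B ^ 2 ≠ 0 := by rw [mul_comm]; exact hD'
    field_simp [hD'']
    ring
  -- Hua's identity step
  have hHua : ∀ a b : F, a ≠ 0 → b ≠ 0 → a ≠ (b⁻¹) ^ 2 →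
      f (a ^ 2 * b ^ 2) = f a ^ 2 * g b ^ 2 := by
    intro a b ha hb hab
    set c : F := (b⁻¹) ^ 2 - a with hc
    have hcne : c ≠ 0 := sub_ne_zero_of_ne (Ne.symm hab)
    have hA : f a ≠ 0 := hne _ ha
    have hB : g b ≠ 0 := hgne _ hb
    have hC : f c ≠ 0 := hne _ hcne
    have hfc : f c = (g b)⁻¹ ^ 2 - f a := by
      rw [hc, hsub, ← hfinv, ← hfsq]
    -- argument identity
    have harg : a ^ 2 * b ^ 2 = a - ((a⁻¹ + c⁻¹)⁻¹) := by
      rw [hc]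
      exact (hval a b ha hb (by rw [← hc]; exact hcne)).symm
    have hchain : f (a ^ 2 * b ^ 2) = f a - ((f a)⁻¹ + (f c)⁻¹)⁻¹ := by
      rw [harg, hsub, hfinv, hgadd, hginv, hginv]
    rw [hfc] at hchain
    rw [hchain]
    have hCne : (g b)⁻¹ ^ 2 - f a ≠ 0 := by rw [← hfc]; exact hC
    exact hval (f a) (g b) hA hB hCne
  -- squares of f and g agree
  have hsq_eq : ∀ b : F, f b ^ 2 = g b ^ 2 := by
    intro b
    rcases eq_or_ne b 0 with rfl | hb
    · simp [h0, hg0]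
    by_cases hb1 : b ^ 2 = 1
    · have : (b - 1) * (b + 1) = 0 := by linear_combination hb1
      rcases mul_eq_zero.1 this with h' | h'
      · have : b = 1 := by linear_combination h'
        rw [this, h1, hg1]
      · have : b = -1 := by linear_combination h'
        rw [this, show (-1 : F) = -(1 : F) from rfl, hneg, hgneg, h1, hg1]
    · have h1b : (1 : F) ≠ (b⁻¹) ^ 2 := by
        intro h
        apply hb1
        rw [← inv_inv (b ^ 2), ← inv_pow, ← h, inv_one]
      have key := hHua 1 b one_ne_zero hb h1b
      rw [one_pow, one_mul, h1, one_pow, one_mul, hfsq] at key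
      exact key
  intro a b
  by_cases h2 : (2 : F) = 0
  · -- characteristic 2
    have hfg : ∀ x : F, f x = g x := by
      intro x
      have h := hsq_eq x
      have hz : (f x - g x) ^ 2 = 0 := by
        linear_combination h + (g x ^ 2 - f x * g x) * h2
      exact sub_eq_zero.1 (sq_eq_zero_iff.1 hz)
    rcases eq_or_ne a 0 with rfl | ha
    · simp [h0]
    rcases eq_or_ne b 0 with rfl | hb
    · simp [h0]
    by_cases hab : a = (b⁻¹) ^ 2
    · subst hab
      have hfb : f b ≠ 0 := hne _ hb
      have e1 : (b⁻¹) ^ 2 * b = b⁻¹ := by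
        rw [sq, mul_assoc, inv_mul_cancel₀ hb, mul_one]
      rw [e1, hfinv, hfsq, hfinv, ← hfg b]
      rw [sq, mul_assoc, inv_mul_cancel₀ hfb, mul_one]
    · have key := hHua a b ha hb hab
      rw [← hfg] at key
      have e : f ((a * b) ^ 2) = (f a * f b) ^ 2 := by
        rw [show (a * b) ^ 2 = a ^ 2 * b ^ 2 by ring, key]
        ring
      rw [hfsq] at e
      have hz : (f (a * b) - f a * f b) ^ 2 = 0 := by
        linear_combination e + ((f a * f b) ^ 2 - f (a * b) * (f a * f b)) * h2
      exact sub_eq_zero.1 (sq_eq_zero_iff.1 hz)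
  · -- characteristic ≠ 2
    have hab2 : f (2 * (a * b)) = 2 * f (a * b) := by
      rw [two_mul, hadd, two_mul]
    have h := hfsq (a + b)
    rw [hadd a b, show (a + b) ^ 2 = a ^ 2 + 2 * (a * b) + b ^ 2 from by ring,
      hadd, hadd, hab2, hfsq, hfsq] at h
    have hkey : 2 * f (a * b) = 2 * (f a * f b) := by linear_combination h
    exact mul_left_cancel₀ h2 hkey
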